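/- arXiv:2405.18138 — 4 statements merged into one kernel-verified Lean document; each statement's English description precedes it below -/
import Mathlib

section
/- For any measurable set E ⊆ ℝ^N with 0 < |E| < ∞, the Fraenkel asymmetry λ(E) is strictly less than 2, and the infimum defining λ(E) is attained at some point x ∈ ℝ^N (a 'Fraenkel ball' exists). -/
open MeasureTheory Metric Set ENNReal Filter Topology

noncomputable section

abbrev En (N : ℕ) := EuclideanSpace ℝ (Fin N)

/-- The volume of the unit ball in `ℝ^N`. -/
def omegaB (N : ℕ) : ℝ := (volume (Metric.ball (0 : En N) 1)).toReal

/-- The divergence of a vector field on `ℝ^N`. -/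
def divg {N : ℕ} (φ : En N → En N) (x : En N) : ℝ :=
  ∑ i, fderiv ℝ φ x (EuclideanSpace.single i (1 : ℝ)) i

/-- The set of candidate values in the sup defining the distributional perimeter of `E`. -/
def perSet {N : ℕ} (E : Set (En N)) : Set ℝ :=
  {p | ∃ φ : En N → En N, ContDiff ℝ 1 φ ∧ HasCompactSupport φ ∧
    (∀ x, ‖φ x‖ ≤ 1) ∧ p = ∫ x in E, divg φ x}

/-- The distributional (De Giorgi) perimeter of `E`. -/
def perimeter {N : ℕ} (E : Set (En N)) : ℝ := sSup (perSet E)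

/-- `E` has finite perimeter. -/
def HasFinitePerimeter {N : ℕ} (E : Set (En N)) : Prop := BddAbove (perSet E)

/-- The essential diameter of `E`. -/
def essDiam {N : ℕ} (E : Set (En N)) : ℝ≥0∞ :=
  sInf {d : ℝ≥0∞ |
    (volume.prod volume) {p : En N × En N | p.1 ∈ E ∧ p.2 ∈ E ∧ d < edist p.1 p.2} = 0}

/-- The barycenter of `E`. -/
def bary {N : ℕ} (E : Set (En N)) : En N := ((volume E).toReal)⁻¹ • ∫ x in E, x

/-- The radius of the ball having the same volume as `E`. -/
def ballRad {N : ℕ} (E : Set (En N)) : ℝ := ((volume E).toReal / omegaB N) ^ (1 / (N : ℝ))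

/-- The barycentric asymmetry `λ₀(E)`. -/
def lam0 {N : ℕ} (E : Set (En N)) : ℝ :=
  (volume (symmDiff E (Metric.ball (bary E) (ballRad E)))).toReal / (volume E).toReal

/-- The Fraenkel asymmetry `λ(E)`. -/
def fraenkel {N : ℕ} (E : Set (En N)) : ℝ :=
  ⨅ y : En N, (volume (symmDiff E (Metric.ball y (ballRad E)))).toReal / (volume E).toReal

/-- The isoperimetric deficit `δ(E)`. -/
def deficit {N : ℕ} (E : Set (En N)) : ℝ :=
  (perimeter E - perimeter (Metric.ball (0 : En N) (ballRad E))) /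
    perimeter (Metric.ball (0 : En N) (ballRad E))

/-- Measure-theoretic connectedness. -/
def MConnected {N : ℕ} (E : Set (En N)) : Prop :=
  ∀ F : Set (En N), MeasurableSet F → F ⊆ E → 0 < volume F → volume F < volume E →
    perimeter E < perimeter F + perimeter (E \ F)

lemma volume_ball_eqq {N : ℕ} (hN : N ≠ 0) (y : En N) {s : ℝ} (hs : 0 ≤ s) :
    volume (ball y s) = ENNReal.ofReal (s ^ N) * volume (ball (0 : En N) 1) := by
  haveI : Nonempty (Fin N) := ⟨⟨0, Nat.pos_of_ne_zero hN⟩⟩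
  haveI : Nontrivial (En N) := inferInstance
  rw [MeasureTheory.Measure.addHaar_ball volume y hs, finrank_euclideanSpace_fin]

lemma omegaB_pos (N : ℕ) : 0 < omegaB N :=
  ENNReal.toReal_pos (measure_ball_pos _ _ one_pos).ne' measure_ball_lt_top.ne

lemma ballRad_pos {N : ℕ} {E : Set (En N)} (h0 : 0 < volume E) (hfin : volume E ≠ ⊤) :
    0 < ballRad E :=
  Real.rpow_pos_of_pos (div_pos (ENNReal.toReal_pos h0.ne' hfin) (omegaB_pos N)) _

lemma volume_ball_ballRad {N : ℕ} (hN : N ≠ 0) {E : Set (En N)} (h0 : 0 < volume E)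
    (hfin : volume E ≠ ⊤) (y : En N) : volume (ball y (ballRad E)) = volume E := by
  have hr0 : (0:ℝ) ≤ ballRad E := (ballRad_pos h0 hfin).le
  rw [volume_ball_eqq hN y hr0]
  have hrN : ballRad E ^ N = (volume E).toReal / omegaB N := by
    rw [ballRad, ← Real.rpow_natCast (_ ^ (1 / (N:ℝ))) N,
      ← Real.rpow_mul (div_nonneg ENNReal.toReal_nonneg (omegaB_pos N).le),
      one_div, inv_mul_cancel₀ (by exact_mod_cast hN), Real.rpow_one]
  have hω : volume (ball (0 : En N) 1) = ENNReal.ofReal (omegaB N) :=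
    (ENNReal.ofReal_toReal measure_ball_lt_top.ne).symm
  rw [hrN, hω, ← ENNReal.ofReal_mul (div_nonneg ENNReal.toReal_nonneg (omegaB_pos N).le),
    div_mul_cancel₀ _ (omegaB_pos N).ne', ENNReal.ofReal_toReal hfin]

lemma volume_ball_toReal {N : ℕ} (hN : N ≠ 0) (z : En N) {s : ℝ} (hs : 0 ≤ s) :
    (volume (ball z s)).toReal = s ^ N * omegaB N := by
  rw [volume_ball_eqq hN z hs, ENNReal.toReal_mul, ENNReal.toReal_ofReal (by positivity)]; rfl

lemma vol_ann {N : ℕ} (hN : N ≠ 0) (z : En N) {r d : ℝ} (hr : 0 ≤ r) (hd : 0 ≤ d) :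
    (volume (ball z (r + d) \ ball z r)).toReal = ((r + d) ^ N - r ^ N) * omegaB N := by
  rw [measure_diff (ball_subset_ball (by linarith)) measurableSet_ball.nullMeasurableSet
    measure_ball_lt_top.ne,
    ENNReal.toReal_sub_of_le (measure_mono (ball_subset_ball (by linarith)))
      measure_ball_lt_top.ne,
    volume_ball_toReal hN z (by linarith), volume_ball_toReal hN z hr, sub_mul]

lemma h_le {N : ℕ} (hN : N ≠ 0) {E : Set (En N)} (hfin : volume E ≠ ⊤) (y z : En N)
    {r : ℝ} (hr : 0 ≤ r) :
    (volume (E ∩ ball y r)).toReal ≤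
      (volume (E ∩ ball z r)).toReal + ((r + dist y z) ^ N - r ^ N) * omegaB N := by
  have hd : 0 ≤ dist y z := dist_nonneg
  have hsub : E ∩ ball y r ⊆ (E ∩ ball z r) ∪ (ball z (r + dist y z) \ ball z r) := by
    rintro x ⟨hxE, hxy⟩
    by_cases hxz : x ∈ ball z r
    · exact Or.inl ⟨hxE, hxz⟩
    · refine Or.inr ⟨?_, hxz⟩
      rw [mem_ball] at hxy ⊢
      calc dist x z ≤ dist x y + dist y z := dist_triangle ..
        _ < r + dist y z := by linarith
  have h1 : volume (E ∩ ball z r) ≠ ⊤ :=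
    ((measure_mono inter_subset_left).trans_lt hfin.lt_top).ne
  have h2 : volume (ball z (r + dist y z) \ ball z r) ≠ ⊤ :=
    ((measure_mono diff_subset).trans_lt measure_ball_lt_top).ne
  calc (volume (E ∩ ball y r)).toReal
      ≤ (volume (E ∩ ball z r) + volume (ball z (r + dist y z) \ ball z r)).toReal :=
        ENNReal.toReal_mono (ENNReal.add_ne_top.2 ⟨h1, h2⟩)
          ((measure_mono hsub).trans (measure_union_le _ _))
    _ = (volume (E ∩ ball z r)).toReal + (volume (ball z (r + dist y z) \ ball z r)).toReal :=
        ENNReal.toReal_add h1 h2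
    _ = _ := by rw [vol_ann hN z hr hd]

lemma h_cont {N : ℕ} (hN : N ≠ 0) {E : Set (En N)} (hfin : volume E ≠ ⊤) {r : ℝ} (hr : 0 ≤ r) :
    Continuous fun y : En N => (volume (E ∩ ball y r)).toReal := by
  rw [continuous_iff_continuousAt]
  intro z
  have key : ∀ y : En N, dist ((volume (E ∩ ball y r)).toReal) ((volume (E ∩ ball z r)).toReal)
      ≤ ((r + dist y z) ^ N - r ^ N) * omegaB N := by
    intro y
    rw [Real.dist_eq, abs_sub_le_iff]
    refine ⟨by linarith [h_le hN hfin y z hr], ?_⟩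
    have := h_le hN hfin z y hr
    rw [dist_comm z y] at this
    linarith
  have hb : Tendsto (fun y : En N => ((r + dist y z) ^ N - r ^ N) * omegaB N) (𝓝 z) (𝓝 0) := by
    have hc : Continuous fun y : En N => ((r + dist y z) ^ N - r ^ N) * omegaB N :=
      (((continuous_const.add (continuous_id.dist continuous_const)).pow N).sub
        continuous_const).mul continuous_const
    have h2 := hc.tendsto z
    simpa using h2
  rw [ContinuousAt, tendsto_iff_dist_tendsto_zero]
  exact squeeze_zero (fun y => dist_nonneg) key hb

/-- The Fraenkel asymmetry is strictly less than `2` and the infimum defining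
it is attained (a Fraenkel ball exists). -/
theorem fraenkel_lt_two_and_attained {N : ℕ} (E : Set (En N)) (hmeas : MeasurableSet E)
    (h0 : 0 < volume E) (hfin : volume E ≠ ⊤) :
    fraenkel E < 2 ∧ ∃ x : En N,
      (volume (symmDiff E (Metric.ball x (ballRad E)))).toReal / (volume E).toReal
        = fraenkel E := by
  rcases Nat.eq_zero_or_pos N with hN0 | hNpos
  · subst hN0
    haveI : Subsingleton (En 0) := inferInstance
    have hE : E = univ := by
      obtain ⟨x, hx⟩ := nonempty_of_measure_ne_zero h0.ne'
      exact eq_univ_of_forall fun z => (Subsingleton.elim x z) ▸ hx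
    have hball : ∀ y : En 0, ball y (ballRad E) = univ := by
      intro y
      refine eq_univ_of_forall fun z => ?_
      rw [mem_ball, Subsingleton.elim z y, dist_self]
      simp [ballRad]
    have hzero : ∀ y : En 0,
        (volume (symmDiff E (ball y (ballRad E)))).toReal / (volume E).toReal = 0 := by
      intro y; rw [hball, hE, symmDiff_self]; simp
    have hfr : fraenkel E = 0 := by
      rw [fraenkel]; simp only [hzero]; exact ciInf_const
    exact ⟨by rw [hfr]; norm_num, ⟨0, by rw [hzero, hfr]⟩⟩
  have hN : N ≠ 0 := hNpos.ne'
  set r : ℝ := ballRad E with hr_def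
  set m : ℝ := (volume E).toReal with hm_def
  have hm : 0 < m := ENNReal.toReal_pos h0.ne' hfin
  have hrpos : 0 < r := ballRad_pos h0 hfin
  set h : En N → ℝ := fun y => (volume (E ∩ ball y r)).toReal with hh_def
  set f : En N → ℝ := fun y => (volume (symmDiff E (ball y r))).toReal / m with hf_def
  have hfr_eq : fraenkel E = ⨅ y, f y := rfl
  have hinterfin : ∀ y : En N, volume (E ∩ ball y r) ≠ ⊤ := fun y =>
    ((measure_mono inter_subset_left).trans_lt hfin.lt_top).ne
  have hformula : ∀ y : En N, f y = (2 * m - 2 * h y) / m := by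
    intro y
    have hB : volume (ball y r) = volume E := volume_ball_ballRad hN h0 hfin y
    have e1 : volume (E \ ball y r) + volume (E ∩ ball y r) = volume E :=
      measure_diff_add_inter E measurableSet_ball
    have e2 : volume (ball y r \ E) + volume (ball y r ∩ E) = volume (ball y r) :=
      measure_diff_add_inter _ hmeas
    rw [inter_comm] at e2
    have hsd : volume (symmDiff E (ball y r)) = volume (E \ ball y r) + volume (ball y r \ E) :=
      measure_symmDiff_eq hmeas.nullMeasurableSet measurableSet_ball.nullMeasurableSet
    have fin1 : volume (E \ ball y r) ≠ ⊤ :=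
      ((measure_mono diff_subset).trans_lt hfin.lt_top).ne
    have fin2 : volume (ball y r \ E) ≠ ⊤ :=
      ((measure_mono diff_subset).trans_lt measure_ball_lt_top).ne
    have t1 : (volume (E \ ball y r)).toReal + h y = m := by
      rw [hh_def, hm_def, ← ENNReal.toReal_add fin1 (hinterfin y), e1]
    have t2 : (volume (ball y r \ E)).toReal + h y = m := by
      rw [hh_def, hm_def, ← ENNReal.toReal_add fin2 (hinterfin y), e2, hB]
    rw [hf_def]
    simp only
    rw [hsd, ENNReal.toReal_add fin1 fin2]
    congr 1
    linarith
  have hcont : Continuous h := h_cont hN hfin hrpos.le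
  have hfcont : Continuous f := by
    have : f = fun y => (2 * m - 2 * h y) / m := funext hformula
    rw [this]
    exact (continuous_const.sub (continuous_const.mul hcont)).div_const m
  -- existence of y₀ with positive intersection
  obtain ⟨y₀, hy₀⟩ : ∃ y₀ : En N, 0 < h y₀ := by
    by_contra hcon
    push_neg at hcon
    have hzero : ∀ y : En N, volume (E ∩ ball y r) = 0 := by
      intro y
      have h1 : (volume (E ∩ ball y r)).toReal = 0 :=
        le_antisymm (hcon y) ENNReal.toReal_nonneg
      rcases (ENNReal.toReal_eq_zero_iff _).1 h1 with h' | h'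
      · exact h'
      · exact absurd h' (hinterfin y)
    have hu : DenseRange (TopologicalSpace.denseSeq (En N)) :=
      TopologicalSpace.denseRange_denseSeq (En N)
    have hcover : E ⊆ ⋃ n, E ∩ ball (TopologicalSpace.denseSeq (En N) n) r := by
      intro x hx
      obtain ⟨n, hn⟩ := hu.exists_dist_lt x hrpos
      exact mem_iUnion.2 ⟨n, hx, mem_ball.2 hn⟩
    have : volume E = 0 :=
      le_antisymm (((measure_mono hcover).trans (measure_iUnion_le _)).trans
        (by simp [hzero])) zero_le
    exact absurd this h0.ne'
  -- decay at infinity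
  obtain ⟨R, hR⟩ : ∃ R : ℝ, ∀ y : En N, y ∉ closedBall (0 : En N) R → h y < h y₀ := by
    have hc0 : 0 < volume (E ∩ ball y₀ r) := by
      by_contra hc
      push_neg at hc
      have : volume (E ∩ ball y₀ r) = 0 := le_antisymm hc zero_le
      rw [hh_def] at hy₀
      simp only [this] at hy₀
      simp at hy₀
    have htend : Tendsto (fun n : ℕ => volume (E \ closedBall (0 : En N) n)) atTop (𝓝 0) := by
      have hmeas' : ∀ n : ℕ, NullMeasurableSet (E \ closedBall (0 : En N) n) volume :=
        fun n => (hmeas.diff measurableSet_closedBall).nullMeasurableSet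
      have hanti : Antitone (fun n : ℕ => E \ closedBall (0 : En N) n) := by
        intro a b hab
        exact diff_subset_diff_right (closedBall_subset_closedBall (by exact_mod_cast hab))
      have hfin' : ∃ n : ℕ, volume (E \ closedBall (0 : En N) n) ≠ ∞ :=
        ⟨0, ((measure_mono diff_subset).trans_lt hfin.lt_top).ne⟩
      have := tendsto_measure_iInter_atTop hmeas' hanti hfin'
      have hempty : ⋂ n : ℕ, (E \ closedBall (0 : En N) n) = ∅ := by
        ext x
        simp only [mem_iInter, mem_diff, mem_empty_iff_false, iff_false, not_forall]
        obtain ⟨n, hn⟩ := exists_nat_ge (dist x 0)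
        exact ⟨n, fun ⟨_, hc⟩ => hc (mem_closedBall.2 hn)⟩
      rw [hempty] at this
      simpa [Function.comp_def] using this
    have hev : ∀ᶠ n : ℕ in atTop, volume (E \ closedBall (0 : En N) n) < volume (E ∩ ball y₀ r) :=
      htend.eventually_lt_const hc0
    obtain ⟨n, hn⟩ := hev.exists
    refine ⟨n + r, fun y hy => ?_⟩
    rw [mem_closedBall, not_le] at hy
    have hsub : E ∩ ball y r ⊆ E \ closedBall (0 : En N) n := by
      rintro x ⟨hxE, hxy⟩
      refine ⟨hxE, ?_⟩
      rw [mem_closedBall, not_le]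
      have h1 : dist y 0 ≤ dist y x + dist x 0 := dist_triangle ..
      have h2 : dist y x < r := by rw [dist_comm]; exact mem_ball.1 hxy
      linarith
    have hlt : volume (E ∩ ball y r) < volume (E ∩ ball y₀ r) :=
      lt_of_le_of_lt (measure_mono hsub) hn
    exact ENNReal.toReal_lt_toReal (hinterfin y) (hinterfin y₀) |>.mpr hlt
  -- minimum on a large compact ball
  set R' : ℝ := max R ‖y₀‖ with hR'_def
  have hy₀K : y₀ ∈ closedBall (0 : En N) R' := by
    rw [mem_closedBall, dist_zero_right]
    exact le_max_right _ _
  obtain ⟨x₀, hx₀K, hminOn⟩ := (isCompact_closedBall (0 : En N) R').exists_isMinOn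
    ⟨y₀, hy₀K⟩ hfcont.continuousOn
  have hglobal : ∀ y : En N, f x₀ ≤ f y := by
    intro y
    by_cases hy : y ∈ closedBall (0 : En N) R'
    · exact isMinOn_iff.1 hminOn y hy
    · have h1 : h y < h y₀ := hR y fun hc => hy
        (closedBall_subset_closedBall (le_max_left _ _) hc)
      have h2 : f y₀ ≤ f y := by
        rw [hformula y₀, hformula y]
        have hnum : 2 * m - 2 * h y₀ ≤ 2 * m - 2 * h y := by linarith
        exact div_le_div_of_nonneg_right hnum hm.le
      exact (isMinOn_iff.1 hminOn y₀ hy₀K).trans h2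
  have hbdd : BddBelow (Set.range f) := by
    refine ⟨0, ?_⟩
    rintro v ⟨y, rfl⟩
    exact div_nonneg ENNReal.toReal_nonneg hm.le
  have hfr : fraenkel E = f x₀ := by
    rw [hfr_eq]
    exact le_antisymm (ciInf_le hbdd x₀) (le_ciInf hglobal)
  refine ⟨?_, x₀, hfr.symm⟩
  rw [hfr]
  calc f x₀ ≤ f y₀ := isMinOn_iff.1 hminOn y₀ hy₀K
    _ = (2 * m - 2 * h y₀) / m := hformula y₀
    _ < 2 := by rw [div_lt_iff₀ hm]; linarith
end
end

section
/- Let G, H̃ ⊆ ℝ^N be bounded measurable sets with |G| = |H̃| > 0, and suppose that G ∪ H̃ has diameter at most D′. Then |G Δ H̃| ≥ (2|G|/D′) |bar(G) − bar(H̃)|, where bar denotes the barycenter. -/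
open MeasureTheory Metric Set ENNReal

noncomputable section

/-- If `|G| = |H̃| > 0` and `G ∪ H̃` has diameter at most `D'`, then
`|G Δ H̃| ≥ (2|G|/D') |bar(G) - bar(H̃)|`. -/
theorem symmDiff_ge_dist_bary {N : ℕ} (G Ht : Set (En N))
    (hG : MeasurableSet G) (hHt : MeasurableSet Ht)
    (hGb : Bornology.IsBounded G) (hHtb : Bornology.IsBounded Ht)
    (h1 : volume G = volume Ht) (h0 : 0 < volume G)
    (D' : ℝ) (hD0 : 0 < D') (hD : Metric.diam (G ∪ Ht) ≤ D') :
    2 * (volume G).toReal / D' * dist (bary G) (bary Ht)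
      ≤ (volume (symmDiff G Ht)).toReal := by 
  classical
  have hGfin : volume G ≠ ∞ := hGb.measure_lt_top.ne
  have hHfin : volume Ht ≠ ∞ := hHtb.measure_lt_top.ne
  set v := (volume G).toReal with hv
  have hvpos : 0 < v := ENNReal.toReal_pos h0.ne' hGfin
  -- integrability of identity on subsets of G ∪ Ht
  have hbdd : ∃ C : ℝ, ∀ x ∈ G ∪ Ht, ‖x‖ ≤ C := (hGb.union hHtb).exists_norm_le
  obtain ⟨C, hC⟩ := hbdd
  have hint : ∀ (s : Set (En N)), MeasurableSet s → s ⊆ G ∪ Ht →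
      IntegrableOn (fun x : En N => x) s volume := by
    intro s hs hsub
    refine Measure.integrableOn_of_bounded (M := C)
      (((hGb.union hHtb).subset hsub).measure_lt_top.ne)
      aestronglyMeasurable_id ?_
    filter_upwards [ae_restrict_mem hs] with x hx using hC x (hsub hx)
  have hintGH : IntegrableOn (fun x : En N => x) (G \ Ht) volume :=
    hint _ (hG.diff hHt) (fun x hx => Or.inl hx.1)
  have hintHG : IntegrableOn (fun x : En N => x) (Ht \ G) volume :=
    hint _ (hHt.diff hG) (fun x hx => Or.inr hx.1)
  have hintI : IntegrableOn (fun x : En N => x) (G ∩ Ht) volume :=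
    hint _ (hG.inter hHt) (fun x hx => Or.inl hx.1)
  -- equal measures of the two differences
  have hmeq : volume (G \ Ht) = volume (Ht \ G) := by
    have h2 : volume (G \ Ht) + volume (G ∩ Ht) = volume G := measure_diff_add_inter G hHt
    have h3 : volume (Ht \ G) + volume (Ht ∩ G) = volume Ht := measure_diff_add_inter Ht hG
    rw [Set.inter_comm] at h3
    have hIfin : volume (G ∩ Ht) ≠ ∞ := (measure_mono Set.inter_subset_left).trans_lt hGb.measure_lt_top |>.ne
    have := h2.trans (h1.trans h3.symm)
    exact WithTop.add_right_cancel hIfin this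
  set m := (volume (G \ Ht)).toReal with hm
  have hmfin : volume (G \ Ht) ≠ ∞ := ((measure_mono Set.diff_subset).trans_lt hGb.measure_lt_top).ne
  have hmfin' : volume (Ht \ G) ≠ ∞ := hmeq ▸ hmfin
  have hm' : (volume (Ht \ G)).toReal = m := by rw [← hmeq]
  have hmnonneg : 0 ≤ m := ENNReal.toReal_nonneg
  -- symm diff measure
  have hsd : (volume (symmDiff G Ht)).toReal = 2 * m := by
    rw [Set.symmDiff_def, measure_union (disjoint_sdiff_sdiff) (hHt.diff hG),
      ENNReal.toReal_add hmfin hmfin', hm', ← hm]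
    ring
  -- integral split
  have hsplitG : (∫ x in G, x) = (∫ x in G \ Ht, x) + (∫ x in G ∩ Ht, x) := by
    rw [← setIntegral_union disjoint_sdiff_inter (hG.inter hHt) hintGH hintI,
      Set.diff_union_inter]
  have hsplitH : (∫ x in Ht, x) = (∫ x in Ht \ G, x) + (∫ x in G ∩ Ht, x) := by
    rw [← setIntegral_union (Set.inter_comm G Ht ▸ disjoint_sdiff_inter)
      (hG.inter hHt) hintHG (hint _ (hG.inter hHt) (fun x hx => Or.inl hx.1)), Set.inter_comm,
      Set.diff_union_inter]
  have hsplit : (∫ x in G, x) - (∫ x in Ht, x) = (∫ x in G \ Ht, x) - (∫ x in Ht \ G, x) := by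
    rw [hsplitG, hsplitH]; abel
  -- key bound
  have hkey : ‖(∫ x in G \ Ht, x) - (∫ x in Ht \ G, x)‖ ≤ D' * m := by
    rcases eq_or_lt_of_le (zero_le : 0 ≤ volume (G \ Ht)) with h | hpos
    · have h0' : volume (G \ Ht) = 0 := h.symm
      have h0'' : volume (Ht \ G) = 0 := hmeq ▸ h0'
      rw [Measure.restrict_eq_zero.mpr h0', Measure.restrict_eq_zero.mpr h0'']
      simp only [integral_zero_measure, sub_zero, norm_zero]
      positivity
    · have hmpos : 0 < m := ENNReal.toReal_pos hpos.ne' hmfin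
      set c : En N := m⁻¹ • ∫ x in Ht \ G, x with hc
      have hHc : (∫ x in Ht \ G, x) = m • c := by
        rw [hc, smul_smul, mul_inv_cancel₀ hmpos.ne', one_smul]
      have hdist : ∀ x ∈ G \ Ht, ‖x - c‖ ≤ D' := by
        intro x hx
        have hxc : x - c = m⁻¹ • ∫ y in Ht \ G, (x - y) := by
          rw [integral_sub (integrableOn_const hmfin' : IntegrableOn (fun _ => x) (Ht \ G) volume) hintHG,
            setIntegral_const, measureReal_def, hHc, hm']
          simp [smul_sub, smul_smul, inv_mul_cancel₀ hmpos.ne']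
        have hbd : ‖∫ y in Ht \ G, (x - y)‖ ≤ D' * m := by
          have : ‖∫ y in Ht \ G, (x - y)‖ ≤ D' * (volume (Ht \ G)).toReal := norm_setIntegral_le_of_norm_le_const (C := D') hmfin'.lt_top
            (fun y hy => by
              have : dist x y ≤ D' := le_trans (dist_le_diam_of_mem (hGb.union hHtb)
                (Or.inl hx.1) (Or.inr hy.1)) hD
              simpa [dist_eq_norm] using this)
          calc ‖∫ y in Ht \ G, (x - y)‖ ≤ D' * (volume (Ht \ G)).toReal := this
            _ = D' * m := by rw [hm']
        rw [hxc, norm_smul, norm_inv, Real.norm_eq_abs, abs_of_pos hmpos]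
        calc m⁻¹ * ‖∫ y in Ht \ G, (x - y)‖ ≤ m⁻¹ * (D' * m) := by
              exact mul_le_mul_of_nonneg_left hbd (inv_nonneg.2 hmnonneg)
          _ = D' := by field_simp
      have hcc : (∫ x in G \ Ht, x) - (∫ x in Ht \ G, x) = ∫ x in G \ Ht, (x - c) := by
        rw [integral_sub hintGH (integrableOn_const hmfin : IntegrableOn (fun _ => c) (G \ Ht) volume),
          setIntegral_const, measureReal_def, hHc, hm]
      rw [hcc]
      exact norm_setIntegral_le_of_norm_le_const hmfin.lt_top hdist
  -- distance of barycenters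
  have hvH : (volume Ht).toReal = v := by rw [hv, h1]
  have hdb : dist (bary G) (bary Ht) ≤ v⁻¹ * (D' * m) := by
    have : dist (bary G) (bary Ht) = v⁻¹ * ‖(∫ x in G, x) - (∫ x in Ht, x)‖ := by
      rw [bary, bary, hvH, dist_eq_norm, ← smul_sub, norm_smul, norm_inv, Real.norm_eq_abs,
        abs_of_pos hvpos, hv]
    rw [this, hsplit]
    exact mul_le_mul_of_nonneg_left hkey (inv_nonneg.2 hvpos.le)
  rw [hsd]
  calc 2 * v / D' * dist (bary G) (bary Ht) ≤ 2 * v / D' * (v⁻¹ * (D' * m)) := by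
        exact mul_le_mul_of_nonneg_left hdb (by positivity)
    _ = 2 * m := by field_simp
end
end

section
/- For every ε ∈ [0, 1/4] and every N ≥ 1, one has (1 + 2ε)^{(N−1)/N} + (1 − 2ε)^{(N−1)/N} ≥ 2 − 2^{3 + 1/N} ((N−1)/N²) ε². -/
open MeasureTheory Metric Set ENNReal

noncomputable section

lemma rpow_taylor_lower {p : ℝ} (hp0 : 0 ≤ p) (hp1 : p ≤ 1) {t : ℝ}
    (ht : t ∈ Icc (1/2 : ℝ) (3/2)) :
    1 + p * (t - 1) - (p * (1 - p) / 2 * (2:ℝ) ^ (2 - p)) * (t - 1) ^ 2 ≤ t ^ p := by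
  obtain ⟨ht1, ht2⟩ := ht
  set K : ℝ := p * (1 - p) / 2 * (2:ℝ) ^ (2 - p) with hKdef
  have h2 : (2:ℝ) ≤ (2:ℝ) ^ (2 - p) := by
    nth_rewrite 1 [show (2:ℝ) = (2:ℝ) ^ (1:ℝ) by rw [Real.rpow_one]]
    exact Real.rpow_le_rpow_of_exponent_le one_le_two (by linarith)
  have hKnn : 0 ≤ K := by
    have : (0:ℝ) ≤ (2:ℝ) ^ (2 - p) := (Real.rpow_pos_of_pos two_pos _).le
    have h1 : 0 ≤ p * (1 - p) := mul_nonneg hp0 (by linarith)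
    positivity
  have h2K : 2 * (p * (1 - p)) ≤ 2 * K := by
    rw [hKdef]
    nlinarith [mul_nonneg hp0 (by linarith : (0:ℝ) ≤ 1 - p)]
  set g : ℝ → ℝ := fun t => t ^ p - (1 + p * (t - 1) - K * (t - 1) ^ 2) with hg
  have hder : ∀ x : ℝ, x ≠ 0 → HasDerivAt g (p * x ^ (p - 1) - p + K * (2 * (x - 1))) x := by
    intro x hx
    have h1 : HasDerivAt (fun y : ℝ => y ^ p) (p * x ^ (p - 1)) x :=
      Real.hasDerivAt_rpow_const (Or.inl hx)
    have h2 : HasDerivAt (fun y : ℝ => 1 + p * (y - 1) - K * (y - 1) ^ 2)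
        (p - K * (2 * (x - 1))) x := by
      have : HasDerivAt (fun y : ℝ => 1 + p * (y - 1) - K * (y - 1) ^ 2)
          (0 + p * 1 - K * (2 * (x - 1) ^ 1 * 1)) x := by
        exact (((hasDerivAt_const x (1:ℝ)).add (((hasDerivAt_id x).sub_const 1).const_mul p)).sub
          ((((hasDerivAt_id x).sub_const 1).pow 2).const_mul K))
      simpa using this
    have := h1.sub h2
    convert this using 1
    · rfl
    · rfl
    · rfl
    · ring
  have hcont : ContinuousOn g (Icc (1/2 : ℝ) (3/2)) := by
    intro x hx
    exact ((hder x (by rintro rfl; norm_num at hx)).continuousAt).continuousWithinAt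
  -- derivative nonneg on (1, 3/2)
  have hmono : MonotoneOn g (Icc (1:ℝ) (3/2)) := by
    apply monotoneOn_of_deriv_nonneg (convex_Icc _ _)
      (hcont.mono (Icc_subset_Icc (by norm_num) le_rfl))
    · intro x hx
      rw [interior_Icc] at hx
      exact (hder x (by linarith [hx.1])).differentiableAt.differentiableWithinAt
    · intro x hx
      rw [interior_Icc] at hx
      obtain ⟨hx1, hx2⟩ := hx
      rw [(hder x (by linarith)).deriv]
      -- need : 0 ≤ p * x ^ (p-1) - p + K*(2*(x-1))
      have hxpos : (0:ℝ) < x := by linarith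
      have hB : x ^ (1 - p) ≤ 1 + (1 - p) * (x - 1) := by
        have := rpow_one_add_le_one_add_mul_self (s := x - 1) (by linarith)
          (by linarith : (0:ℝ) ≤ 1 - p) (by linarith)
        simpa using this
      have hA1 : (1:ℝ) ≤ x ^ (1 - p) := Real.one_le_rpow (by linarith) (by linarith)
      have hinv : x ^ (p - 1) = (x ^ (1 - p))⁻¹ := by
        rw [show p - 1 = -(1 - p) by ring, Real.rpow_neg hxpos.le]
      have hApos : (0:ℝ) < x ^ (1 - p) := by linarith
      -- 1 - (x^(1-p))⁻¹ ≤ (1-p)*(x-1)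
      have key : 1 - (x ^ (1 - p))⁻¹ ≤ (1 - p) * (x - 1) := by
        have hmul : (x ^ (1 - p))⁻¹ * x ^ (1 - p) = 1 := inv_mul_cancel₀ hApos.ne'
        nlinarith [inv_nonneg.mpr hApos.le]
      rw [hinv]
      nlinarith [mul_le_mul_of_nonneg_left key hp0]
  have hanti : AntitoneOn g (Icc (1/2:ℝ) 1) := by
    apply antitoneOn_of_deriv_nonpos (convex_Icc _ _)
      (hcont.mono (Icc_subset_Icc le_rfl (by norm_num)))
    · intro x hx
      rw [interior_Icc] at hx
      exact (hder x (by linarith [hx.1])).differentiableAt.differentiableWithinAt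
    · intro x hx
      rw [interior_Icc] at hx
      obtain ⟨hx1, hx2⟩ := hx
      rw [(hder x (by linarith)).deriv]
      have hxpos : (0:ℝ) < x := by linarith
      have hB : x ^ p ≤ 1 + p * (x - 1) := by
        have := rpow_one_add_le_one_add_mul_self (s := x - 1) (by linarith) hp0 hp1
        simpa using this
      have hsub : x ^ (p - 1) = x ^ p / x := by
        rw [show p - 1 = p - 1 from rfl, Real.rpow_sub hxpos, Real.rpow_one]
      have hxp_nn : (0:ℝ) ≤ x ^ p := (Real.rpow_pos_of_pos hxpos p).le
      -- x^(p-1) - 1 ≤ 2*(1-p)*(1-x)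
      have key : x ^ (p - 1) - 1 ≤ 2 * (1 - p) * (1 - x) := by
        have h3 : x ^ p / x ≤ 1 + 2 * (1 - p) * (1 - x) := by
          rw [div_le_iff₀ hxpos]
          nlinarith [mul_nonneg (mul_nonneg (by linarith : (0:ℝ) ≤ 1 - p)
            (by linarith : (0:ℝ) ≤ 1 - x)) (by linarith : (0:ℝ) ≤ 2 * x - 1)]
        rw [hsub]; linarith
      nlinarith [mul_le_mul_of_nonneg_left key hp0]
  have hg1 : g 1 = 0 := by simp [hg]
  have : 0 ≤ g t := by
    rcases le_total t 1 with h | h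
    · have := hanti ⟨ht1, h⟩ ⟨by norm_num, le_rfl⟩ h
      rw [hg1] at this; exact this
    · have := hmono ⟨le_rfl, by norm_num⟩ ⟨h, ht2⟩ h
      rw [hg1] at this; exact this
  simp only [hg] at this
  linarith

/-- For `ε ∈ [0,1/4]` and `N ≥ 1`,
`(1+2ε)^{(N-1)/N} + (1-2ε)^{(N-1)/N} ≥ 2 - 2^{3+1/N} ((N-1)/N²) ε²`. -/
theorem two_point_concavity (N : ℕ) (hN : 1 ≤ N) (ε : ℝ) (hε : ε ∈ Icc (0 : ℝ) (1/4)) :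
    2 - (2 : ℝ) ^ (3 + 1 / (N : ℝ)) * (((N : ℝ) - 1) / (N : ℝ) ^ 2) * ε ^ 2
      ≤ (1 + 2 * ε) ^ (((N : ℝ) - 1) / N) + (1 - 2 * ε) ^ (((N : ℝ) - 1) / N) := by
  obtain ⟨hε0, hε1⟩ := hε
  have hN0 : (0:ℝ) < N := by exact_mod_cast Nat.pos_of_ne_zero (by omega)
  have hN1 : (1:ℝ) ≤ N := by exact_mod_cast hN
  set p : ℝ := ((N:ℝ) - 1) / N with hpdef
  have hp0 : 0 ≤ p := div_nonneg (by linarith) hN0.le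
  have hp1 : p ≤ 1 := by rw [hpdef, div_le_one hN0]; linarith
  set C : ℝ := p * (1 - p) / 2 * (2:ℝ) ^ (2 - p) with hCdef
  have k1 := rpow_taylor_lower hp0 hp1 (t := 1 + 2*ε) ⟨by linarith, by linarith⟩
  have k2 := rpow_taylor_lower hp0 hp1 (t := 1 - 2*ε) ⟨by linarith, by linarith⟩
  rw [show (1 + 2*ε - 1) = 2*ε by ring] at k1
  rw [show (1 - 2*ε - 1) = -(2*ε) by ring] at k2
  have hD : (2:ℝ) ^ (3 + 1/(N:ℝ)) * (((N:ℝ)-1)/(N:ℝ)^2) = 8 * C := by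
    rw [hCdef]
    have e1 : 2 - p = 1 + 1/(N:ℝ) := by rw [hpdef]; field_simp; ring
    have e2 : (3 + 1/(N:ℝ)) = 2 + (1 + 1/(N:ℝ)) := by ring
    have e3 : (2:ℝ) ^ (2:ℝ) = 4 := by
      have := Real.rpow_natCast (2:ℝ) 2
      norm_num at this; linarith
    have h1p : 1 - p = 1/(N:ℝ) := by rw [hpdef]; field_simp; ring
    have e4 : ((N:ℝ)-1)/(N:ℝ)^2 = p * (1-p) := by
      rw [h1p, hpdef, div_mul_div_comm, mul_one, sq]
    rw [e1, e2, Real.rpow_add two_pos, e3, e4]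
    ring
  rw [← hCdef] at k1 k2
  rw [hD]
  linarith [k1, k2]
end
end

section
/- Let E ⊆ ℝ^N be an N-symmetric set of finite positive measure, symmetric with respect to each coordinate hyperplane {x_i = 0}, 1 ≤ i ≤ N. Then the barycenter of E is the origin, and λ(E) ≤ λ₀(E) ≤ 2^N λ(E), where λ is the Fraenkel asymmetry and λ₀ the barycentric asymmetry. -/
open MeasureTheory Metric Set ENNReal

noncomputable section

-- auxiliary lemmas

def negC {N : ℕ} (i : Fin N) : En N ≃ₗᵢ[ℝ] En N :=
  LinearIsometryEquiv.piLpCongrRight 2 (fun j => if j = i then .neg ℝ else .refl ℝ ℝ)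

lemma negC_apply {N : ℕ} (i : Fin N) (x : En N) (j : Fin N) :
    negC i x j = if j = i then -(x j) else x j := by
  simp only [negC, LinearIsometryEquiv.piLpCongrRight_apply]
  rcases eq_or_ne j i with h | h
  · subst h; simp
  · simp [h]

lemma negC_eq_update {N : ℕ} (i : Fin N) (x : En N) :
    negC i x = (WithLp.toLp 2 (Function.update x i (-(x i))) : En N) := by
  ext j
  rw [negC_apply]
  rcases eq_or_ne j i with h | h
  · subst h; simp
  · simp [h, Function.update_apply]

lemma negC_invol {N : ℕ} (i : Fin N) (x : En N) : negC i (negC i x) = x := by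
  ext j; rw [negC_apply, negC_apply]
  rcases eq_or_ne j i with h | h <;> simp [h, negC_apply]

lemma negC_mp {N : ℕ} (i : Fin N) : MeasurePreserving (negC i) (volume : Measure (En N)) volume :=
  (negC i).measurePreserving

lemma negC_mem {N : ℕ} {i : Fin N} {E : Set (En N)}
    (hs : (fun x : En N => (WithLp.toLp 2 (Function.update x i (-(x i))) : En N)) '' E = E) (x : En N) :
    negC i x ∈ E ↔ x ∈ E := by
  constructor
  · intro h
    rw [← hs] at h
    obtain ⟨z, hz, hzx⟩ := h
    simp only [← negC_eq_update i z] at hzx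
    have := congrArg (negC i) hzx
    rw [negC_invol, negC_invol] at this
    rwa [← this]
  · intro h
    rw [← hs]
    exact ⟨x, h, (negC_eq_update i x).symm⟩

lemma meas_eval {N : ℕ} (i : Fin N) : Measurable (fun x : En N => x i) :=
  (EuclideanSpace.proj (𝕜 := ℝ) i).continuous.measurable

lemma hyper_null {N : ℕ} (i : Fin N) : volume {x : En N | x i = 0} = 0 := by
  have : {x : En N | x i = 0} = (LinearMap.ker ((EuclideanSpace.proj (𝕜 := ℝ) i) : En N →ₗ[ℝ] ℝ) : Set (En N)) := by
    ext x; simp [LinearMap.mem_ker]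
  rw [this]
  apply Measure.addHaar_submodule
  intro h
  have h1 : (EuclideanSpace.single i (1:ℝ) : En N) ∈ (⊤ : Submodule ℝ (En N)) := trivial
  rw [← h, LinearMap.mem_ker] at h1
  simp at h1

lemma ball_inter_subset {N : ℕ} (i : Fin N) {y y' : En N} (hy : 0 ≤ y i)
    (h0 : y' i = 0) (hag : ∀ j, j ≠ i → y' j = y j) (r : ℝ) :
    ball y r ∩ {x | x i ≤ 0} ⊆ ball y' r := by
  rintro x ⟨hx, hxi⟩
  simp only [mem_ball] at hx ⊢
  refine lt_of_le_of_lt ?_ hx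
  rw [EuclideanSpace.dist_eq, EuclideanSpace.dist_eq]
  apply Real.sqrt_le_sqrt
  apply Finset.sum_le_sum
  intro j _
  rcases eq_or_ne j i with h | h
  · subst h
    simp only [h0, Real.dist_eq]
    have hxj : x j ≤ 0 := hxi
    nlinarith [sq_abs (x j - 0), sq_abs (x j - y j)]
  · simp [hag j h]

lemma negC_dist {N : ℕ} (i : Fin N) (x z : En N) : dist (negC i x) z = dist x (negC i z) := by
  conv_lhs => rw [← negC_invol i z]
  exact (negC i).dist_map x (negC i z)

lemma negC_apply_self {N : ℕ} (i : Fin N) (x : En N) : negC i x i = -(x i) := by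
  rw [negC_apply]; simp

lemma negC_preimage_ball {N : ℕ} (i : Fin N) (y : En N) (r : ℝ) :
    (negC i) ⁻¹' (ball y r) = ball (negC i y) r := by
  ext x
  rw [mem_preimage, mem_ball, mem_ball, negC_dist]

lemma negC_fix {N : ℕ} (i : Fin N) {y' : En N} (h0 : y' i = 0) :
    negC i y' = y' := by
  ext j
  rw [negC_apply]
  rcases eq_or_ne j i with h | h
  · subst h; simp [h0]
  · simp [h]

-- For S symmetric: volume (S ∩ {x_i ≤ 0}) + volume (S ∩ {x_i ≤ 0}) = volume S
lemma sym_half_eq {N : ℕ} (i : Fin N) {S : Set (En N)} (hSm : MeasurableSet S)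
    (hS : ∀ x, negC i x ∈ S ↔ x ∈ S) :
    volume (S ∩ {x | x i ≤ 0}) + volume (S ∩ {x | x i ≤ 0}) = volume S := by
  set T := S ∩ {x : En N | x i ≤ 0} with hT
  set T' := S ∩ {x : En N | 0 ≤ x i} with hT'
  have hTm : MeasurableSet T := hSm.inter (measurableSet_le (meas_eval i) measurable_const)
  have hT'm : MeasurableSet T' := hSm.inter (measurableSet_le measurable_const (meas_eval i))
  have hpre : (negC i) ⁻¹' T' = T := by
    ext x
    simp only [hT, hT', mem_inter_iff, mem_preimage, mem_setOf_eq, hS, negC_apply_self]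
    constructor
    · rintro ⟨h1, h2⟩; exact ⟨h1, by linarith⟩
    · rintro ⟨h1, h2⟩; exact ⟨h1, by linarith⟩
  have hvol : volume T' = volume T := by
    rw [← hpre]
    exact ((negC_mp i).measure_preimage hT'm.nullMeasurableSet).symm ▸ rfl
  have hunion : T ∪ T' = S := by
    ext x
    simp only [hT, hT', mem_union, mem_inter_iff, mem_setOf_eq]
    constructor
    · rintro (⟨h,_⟩|⟨h,_⟩) <;> exact h
    · intro h; rcases le_total (x i) 0 with h2 | h2
      · exact Or.inl ⟨h, h2⟩
      · exact Or.inr ⟨h, h2⟩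
  have hinter : T ∩ T' ⊆ {x : En N | x i = 0} := by
    rintro x ⟨⟨_, h1⟩, ⟨_, h2⟩⟩
    exact le_antisymm h1 h2
  have hiz : volume (T ∩ T') = 0 :=
    measure_mono_null hinter (hyper_null i)
  have := measure_union_add_inter (μ := volume) T hT'm
  rw [hunion, hiz, add_zero] at this
  rw [this, hvol]

lemma sym_half_le {N : ℕ} (i : Fin N) {S : Set (En N)} (hSm : MeasurableSet S)
    (hS : ∀ x, negC i x ∈ S ↔ x ∈ S) :
    volume (S ∩ {x | 0 < x i}) + volume (S ∩ {x | 0 < x i}) ≤ volume S := by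
  set T := S ∩ {x : En N | 0 < x i} with hT
  set T' := S ∩ {x : En N | x i < 0} with hT'
  have hTm : MeasurableSet T := hSm.inter (measurableSet_lt measurable_const (meas_eval i))
  have hpre : (negC i) ⁻¹' T = T' := by
    ext x
    simp only [hT, hT', mem_inter_iff, mem_preimage, mem_setOf_eq, hS, negC_apply_self]
    constructor
    · rintro ⟨h1, h2⟩; exact ⟨h1, by linarith⟩
    · rintro ⟨h1, h2⟩; exact ⟨h1, by linarith⟩
  have hvol : volume T = volume T' := by
    rw [← hpre]; exact ((negC_mp i).measure_preimage hTm.nullMeasurableSet).symm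
  have hdisj : Disjoint T T' := by
    rw [Set.disjoint_left]
    rintro x ⟨_, (h1 : 0 < x i)⟩ ⟨_, (h2 : x i < 0)⟩
    linarith
  calc volume T + volume T = volume T + volume T' := by rw [hvol]
    _ = volume (T ∪ T') := (measure_union hdisj (hSm.inter (measurableSet_lt (meas_eval i) measurable_const))).symm
    _ ≤ volume S := measure_mono (union_subset inter_subset_left inter_subset_left)

lemma sd_reflect {N : ℕ} (i : Fin N) {E : Set (En N)} (hmeas : MeasurableSet E)
    (hsymi : ∀ x, negC i x ∈ E ↔ x ∈ E) (y : En N) (r : ℝ) :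
    volume (symmDiff E (ball (negC i y) r)) = volume (symmDiff E (ball y r)) := by
  have hpre : (negC i) ⁻¹' (symmDiff E (ball y r)) = symmDiff E (ball (negC i y) r) := by
    rw [Set.preimage_symmDiff, negC_preimage_ball]
    congr 1
    ext x; exact hsymi x
  rw [← hpre]
  exact (negC_mp i).measure_preimage
    ((hmeas.symmDiff measurableSet_ball).nullMeasurableSet)

lemma key_ennreal {N : ℕ} (i : Fin N) {E : Set (En N)} (hmeas : MeasurableSet E)
    (hsymi : ∀ x, negC i x ∈ E ↔ x ∈ E) {y y' : En N} (hy : 0 ≤ y i)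
    (h0 : y' i = 0) (hag : ∀ j, j ≠ i → y' j = y j) (r : ℝ) :
    volume (E ∩ ball y r) + volume (E ∩ ball y r) ≤
      volume (E ∩ ball y' r) + volume E := by
  set B := ball y r
  set B' := ball y' r
  have hBm : MeasurableSet B := measurableSet_ball
  have hB'm : MeasurableSet B' := measurableSet_ball
  have hHm : MeasurableSet {x : En N | x i ≤ 0} :=
    measurableSet_le (meas_eval i) measurable_const
  have hsplit : volume (E ∩ B ∩ {x | x i ≤ 0}) + volume (E ∩ B ∩ {x | 0 < x i})
      = volume (E ∩ B) := by
    have := measure_inter_add_diff (μ := volume) (E ∩ B) hHm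
    have hd : (E ∩ B) \ {x : En N | x i ≤ 0} = E ∩ B ∩ {x | 0 < x i} := by
      ext x; simp [mem_diff, not_le, and_assoc]
    rwa [hd] at this
  -- first piece
  have h1 : volume (E ∩ B ∩ {x | x i ≤ 0}) ≤ volume (E ∩ B' ∩ {x | x i ≤ 0}) := by
    apply measure_mono
    rintro x ⟨⟨hxE, hxB⟩, hxH⟩
    exact ⟨⟨hxE, ball_inter_subset i hy h0 hag r ⟨hxB, hxH⟩⟩, hxH⟩
  have hB'sym : ∀ x, negC i x ∈ E ∩ B' ↔ x ∈ E ∩ B' := by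
    intro x
    have : negC i x ∈ B' ↔ x ∈ B' := by
      have hp : (negC i) ⁻¹' B' = B' := by
        rw [negC_preimage_ball, negC_fix i h0]
      constructor
      · intro h
        have h2 : x ∈ (negC i) ⁻¹' B' := h
        rwa [hp] at h2
      · intro h
        have h2 : x ∈ (negC i) ⁻¹' B' := by rwa [hp]
        exact h2
    simp only [mem_inter_iff, hsymi, this]
  have h1' : volume (E ∩ B' ∩ {x | x i ≤ 0}) + volume (E ∩ B' ∩ {x | x i ≤ 0})
      = volume (E ∩ B') := sym_half_eq i (hmeas.inter hB'm) hB'sym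
  -- second piece
  have h2 : volume (E ∩ B ∩ {x | 0 < x i}) ≤ volume (E ∩ {x | 0 < x i}) :=
    measure_mono (fun x ⟨⟨hxE, _⟩, hxH⟩ => ⟨hxE, hxH⟩)
  have h2' : volume (E ∩ {x | 0 < x i}) + volume (E ∩ {x | 0 < x i}) ≤ volume E :=
    sym_half_le i hmeas hsymi
  calc volume (E ∩ B) + volume (E ∩ B)
      = (volume (E ∩ B ∩ {x | x i ≤ 0}) + volume (E ∩ B ∩ {x | x i ≤ 0}))
        + (volume (E ∩ B ∩ {x | 0 < x i}) + volume (E ∩ B ∩ {x | 0 < x i})) := by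
        rw [← hsplit]; ring
    _ ≤ (volume (E ∩ B' ∩ {x | x i ≤ 0}) + volume (E ∩ B' ∩ {x | x i ≤ 0}))
        + (volume (E ∩ {x | 0 < x i}) + volume (E ∩ {x | 0 < x i})) := by
        gcongr
    _ ≤ volume (E ∩ B') + volume E := by rw [h1']; gcongr

lemma sd_toReal {N : ℕ} {E B : Set (En N)} (hE : MeasurableSet E) (hB : MeasurableSet B)
    (hEf : volume E ≠ ⊤) (hBf : volume B ≠ ⊤) :
    (volume (symmDiff E B)).toReal =
      (volume E).toReal + (volume B).toReal - 2 * (volume (E ∩ B)).toReal := by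
  have hIf : volume (E ∩ B) ≠ ⊤ := (lt_of_le_of_lt (measure_mono inter_subset_left)
    (lt_top_iff_ne_top.2 hEf)).ne
  have h1 : volume (E \ B) = volume E - volume (E ∩ B) := by
    rw [← Set.diff_self_inter]
    exact measure_diff inter_subset_left (hE.inter hB).nullMeasurableSet hIf
  have h2 : volume (B \ E) = volume B - volume (E ∩ B) := by
    rw [← Set.diff_inter_self_eq_diff (t := E)]
    exact measure_diff inter_subset_right (hE.inter hB).nullMeasurableSet hIf
  have hu : volume (symmDiff E B) = volume (E \ B) + volume (B \ E) := by
    rw [Set.symmDiff_def]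
    exact measure_union disjoint_sdiff_sdiff (hB.diff hE)
  rw [hu, h1, h2, ENNReal.toReal_add, ENNReal.toReal_sub_of_le (measure_mono inter_subset_left) hEf,
    ENNReal.toReal_sub_of_le (measure_mono inter_subset_right) hBf]
  · ring
  · exact (tsub_le_self.trans_lt (lt_top_iff_ne_top.2 hEf)).ne
  · exact (tsub_le_self.trans_lt (lt_top_iff_ne_top.2 hBf)).ne

lemma step_real_core {N : ℕ} (i : Fin N) {E : Set (En N)} (hmeas : MeasurableSet E)
    (hsymi : ∀ x, negC i x ∈ E ↔ x ∈ E) (hfin : volume E ≠ ⊤) {r : ℝ}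
    (hvol : volume (ball (0 : En N) r) = volume E) {y y' : En N} (hy : 0 ≤ y i)
    (h0 : y' i = 0) (hag : ∀ j, j ≠ i → y' j = y j) :
    (volume (symmDiff E (ball y' r))).toReal ≤ 2 * (volume (symmDiff E (ball y r))).toReal := by
  have hVf : volume (ball y r) ≠ ⊤ := measure_ball_lt_top.ne
  have hV'f : volume (ball y' r) ≠ ⊤ := measure_ball_lt_top.ne
  have hVE : (volume (ball y r)).toReal = (volume E).toReal := by
    rw [Measure.addHaar_ball_center volume y, hvol]
  have hV'E : (volume (ball y' r)).toReal = (volume E).toReal := by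
    rw [Measure.addHaar_ball_center volume y', hvol]
  have hkey := key_ennreal i hmeas hsymi hy h0 hag r
  have hmf : volume (E ∩ ball y r) ≠ ⊤ :=
    (lt_of_le_of_lt (measure_mono inter_subset_left) (lt_top_iff_ne_top.2 hfin)).ne
  have hm'f : volume (E ∩ ball y' r) ≠ ⊤ :=
    (lt_of_le_of_lt (measure_mono inter_subset_left) (lt_top_iff_ne_top.2 hfin)).ne
  have hkeyR : (volume (E ∩ ball y r)).toReal + (volume (E ∩ ball y r)).toReal ≤
      (volume (E ∩ ball y' r)).toReal + (volume E).toReal := by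
    rw [← ENNReal.toReal_add hmf hmf, ← ENNReal.toReal_add hm'f hfin]
    exact ENNReal.toReal_mono (by finiteness) hkey
  rw [sd_toReal hmeas measurableSet_ball hfin hVf, sd_toReal hmeas measurableSet_ball hfin hV'f,
    hVE, hV'E]
  linarith

lemma step_real {N : ℕ} (i : Fin N) {E : Set (En N)} (hmeas : MeasurableSet E)
    (hsymi : ∀ x, negC i x ∈ E ↔ x ∈ E) (hfin : volume E ≠ ⊤) {r : ℝ}
    (hvol : volume (ball (0 : En N) r) = volume E) {y y' : En N}
    (h0 : y' i = 0) (hag : ∀ j, j ≠ i → y' j = y j) :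
    (volume (symmDiff E (ball y' r))).toReal ≤ 2 * (volume (symmDiff E (ball y r))).toReal := by
  rcases le_or_gt 0 (y i) with hy | hy
  · exact step_real_core i hmeas hsymi hfin hvol hy h0 hag
  · have hag' : ∀ j, j ≠ i → y' j = (negC i y) j := by
      intro j hj; rw [negC_apply, if_neg hj]; exact hag j hj
    have hyi : 0 ≤ (negC i y) i := by rw [negC_apply_self]; linarith
    have h := step_real_core i hmeas hsymi hfin hvol hyi h0 hag'
    rwa [sd_reflect i hmeas hsymi y r] at h

def zeroBelow {N : ℕ} (k : ℕ) (y : En N) : En N :=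
  WithLp.toLp 2 (fun j : Fin N => if (j : ℕ) < k then 0 else y j)

lemma zero_out_aux {N : ℕ} {E : Set (En N)} (hmeas : MeasurableSet E)
    (hsym : ∀ i : Fin N, ∀ x, negC i x ∈ E ↔ x ∈ E) (hfin : volume E ≠ ⊤) {r : ℝ}
    (hvol : volume (ball (0 : En N) r) = volume E) :
    ∀ k : ℕ, k ≤ N → ∀ y : En N,
      (volume (symmDiff E (ball (zeroBelow k y) r))).toReal ≤
        2 ^ k * (volume (symmDiff E (ball y r))).toReal := by
  intro k
  induction k with
  | zero =>
    intro _ y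
    have : zeroBelow 0 y = y := by
      ext j; simp [zeroBelow]
    rw [this, pow_zero, one_mul]
  | succ k ih =>
    intro hk y
    have hkN : k < N := hk
    set i : Fin N := ⟨k, hkN⟩ with hi
    have h0 : zeroBelow (k + 1) y i = 0 := by
      simp [zeroBelow, hi, Nat.lt_succ_self]
    have hag : ∀ j, j ≠ i → zeroBelow (k + 1) y j = zeroBelow k y j := by
      intro j hj
      have hjk : (j : ℕ) ≠ k := fun h => hj (Fin.ext h)
      simp only [zeroBelow, PiLp.toLp_apply]
      rcases Nat.lt_or_ge (j : ℕ) k with h | h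
      · rw [if_pos h, if_pos (Nat.lt_succ_of_lt h)]
      · have : ¬ (j : ℕ) < k + 1 := by omega
        rw [if_neg this, if_neg (by omega)]
    calc (volume (symmDiff E (ball (zeroBelow (k+1) y) r))).toReal
        ≤ 2 * (volume (symmDiff E (ball (zeroBelow k y) r))).toReal :=
          step_real i hmeas (hsym i) hfin hvol h0 hag
      _ ≤ 2 * (2 ^ k * (volume (symmDiff E (ball y r))).toReal) := by
          have := ih (le_of_lt hkN) y
          linarith
      _ = 2 ^ (k + 1) * (volume (symmDiff E (ball y r))).toReal := by ring

lemma zero_out {N : ℕ} {E : Set (En N)} (hmeas : MeasurableSet E)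
    (hsym : ∀ i : Fin N, ∀ x, negC i x ∈ E ↔ x ∈ E) (hfin : volume E ≠ ⊤) {r : ℝ}
    (hvol : volume (ball (0 : En N) r) = volume E) (y : En N) :
    (volume (symmDiff E (ball (0 : En N) r))).toReal ≤
      2 ^ N * (volume (symmDiff E (ball y r))).toReal := by
  have h := zero_out_aux hmeas hsym hfin hvol N le_rfl y
  have hz : zeroBelow N y = (0 : En N) := by
    ext j; simp [zeroBelow, j.isLt]
  rwa [hz] at h

lemma integrable_id_on {N : ℕ} {E : Set (En N)} (hmeas : MeasurableSet E)
    (hb : Bornology.IsBounded E) (hfin : volume E ≠ ⊤) :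
    IntegrableOn (fun x : En N => x) E volume := by
  obtain ⟨C, hC⟩ := (isBounded_iff_forall_norm_le).1 hb
  refine Integrable.mono' (g := fun _ => C)
    (integrableOn_const hfin)
    (aestronglyMeasurable_id.restrict) ?_
  filter_upwards [MeasureTheory.ae_restrict_mem hmeas] with x hx
  exact hC x hx

lemma setIntegral_id_eq_zero {N : ℕ} {E : Set (En N)} (hmeas : MeasurableSet E)
    (hb : Bornology.IsBounded E) (hfin : volume E ≠ ⊤)
    (hsym : ∀ i : Fin N, ∀ x, negC i x ∈ E ↔ x ∈ E) :
    (∫ x in E, x : En N) = 0 := by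
  have hint := integrable_id_on hmeas hb hfin
  ext i
  have hproj : (∫ x in E, x : En N) i = ∫ x in E, x i := by
    have := (EuclideanSpace.proj (𝕜 := ℝ) i).integral_comp_comm hint
    simpa using this.symm
  have hpre : (negC i) ⁻¹' E = E := by
    ext x; exact hsym i x
  have hchg : ∫ x in E, x i = ∫ x in E, -(x i) := by
    conv_lhs => rw [← (negC_mp i).setIntegral_preimage_emb
      ((negC i).toHomeomorph.measurableEmbedding) (fun x => x i) E]
    rw [hpre]
    congr 1
    funext x
    rw [negC_apply_self]
  have : (∫ x in E, x i) = 0 := by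
    rw [integral_neg] at hchg
    linarith
  rw [hproj, this]
  rfl


lemma vol_ball_rad {N : ℕ} {E : Set (En N)} (h0 : 0 < volume E) (hfin : volume E ≠ ⊤) :
    volume (ball (0 : En N) (ballRad E)) = volume E := by
  rcases Nat.eq_zero_or_pos N with hN | hN
  · subst hN
    obtain ⟨x, hx⟩ := nonempty_of_measure_ne_zero h0.ne'
    have hE : E = univ := Set.eq_univ_of_forall (fun z => by rwa [Subsingleton.elim z x])
    have hr : ballRad E = 1 := by
      simp [ballRad]
    have hball : ball (0 : En 0) (ballRad E) = univ := by
      rw [hr]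
      apply Set.eq_univ_of_forall
      intro z
      have : z = 0 := Subsingleton.elim z 0
      simp [this, mem_ball]
    rw [hball, hE]
  · haveI : Nonempty (Fin N) := ⟨⟨0, hN⟩⟩
    haveI : Nontrivial (En N) := by
      refine ⟨⟨EuclideanSpace.single ⟨0, hN⟩ 1, 0, fun h => ?_⟩⟩
      have := congrArg (fun v : En N => v ⟨0, hN⟩) h
      simp [EuclideanSpace.single_apply] at this
    have hω : 0 < omegaB N :=
      ENNReal.toReal_pos (measure_ball_pos _ _ one_pos).ne' measure_ball_lt_top.ne
    have hv : 0 < (volume E).toReal := ENNReal.toReal_pos h0.ne' hfin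
    have hr : 0 ≤ ballRad E := Real.rpow_nonneg (by positivity) _
    rw [Measure.addHaar_ball _ _ hr, finrank_euclideanSpace_fin]
    have hpow : (ballRad E) ^ N = (volume E).toReal / omegaB N := by
      rw [ballRad, one_div]
      exact Real.rpow_inv_natCast_pow (by positivity) hN.ne'
    rw [hpow,
      show (volume (ball (0:En N) 1)) = ENNReal.ofReal (omegaB N) from
        (ENNReal.ofReal_toReal measure_ball_lt_top.ne).symm,
      ← ENNReal.ofReal_mul (by positivity), div_mul_cancel₀ _ hω.ne',
      ENNReal.ofReal_toReal hfin]

/-- An `N`-symmetric set (symmetric w.r.t. every coordinate hyperplane) has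
barycenter at the origin and satisfies `λ(E) ≤ λ₀(E) ≤ 2^N λ(E)`. -/
theorem nsymmetric_asymmetry {N : ℕ} (E : Set (En N)) (hmeas : MeasurableSet E)
    (hb : Bornology.IsBounded E) (h0 : 0 < volume E) (hfin : volume E ≠ ⊤)
    (hsym : ∀ i : Fin N,
      (fun x : En N => (WithLp.toLp 2 (Function.update x i (-(x i))) : En N)) '' E = E) :
    bary E = 0 ∧ fraenkel E ≤ lam0 E ∧ lam0 E ≤ 2 ^ N * fraenkel E := by
  have hsym' : ∀ i : Fin N, ∀ x, negC i x ∈ E ↔ x ∈ E := fun i => negC_mem (hsym i)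
  have hbary : bary E = 0 := by
    rw [bary, setIntegral_id_eq_zero hmeas hb hfin hsym', smul_zero]
  have hv : 0 < (volume E).toReal := ENNReal.toReal_pos h0.ne' hfin
  have hbdd : BddBelow (Set.range (fun y : En N =>
      (volume (symmDiff E (Metric.ball y (ballRad E)))).toReal / (volume E).toReal)) := by
    refine ⟨0, ?_⟩
    rintro z ⟨y, rfl⟩
    positivity
  refine ⟨hbary, ?_, ?_⟩
  · rw [lam0, hbary]
    exact ciInf_le hbdd (0 : En N)
  · have hvolb := vol_ball_rad h0 hfin
    have hmain : ∀ y : En N, lam0 E ≤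
        2 ^ N * ((volume (symmDiff E (Metric.ball y (ballRad E)))).toReal / (volume E).toReal) := by
      intro y
      rw [lam0, hbary, ← mul_div_assoc]
      exact (div_le_div_iff_of_pos_right hv).2 (zero_out hmeas hsym' hfin hvolb y)
    have h2 : (0:ℝ) < 2 ^ N := by positivity
    have hinf : lam0 E / 2 ^ N ≤ fraenkel E := by
      rw [fraenkel]
      apply le_ciInf
      intro y
      rw [div_le_iff₀ h2, mul_comm]
      exact hmain y
    calc lam0 E = 2 ^ N * (lam0 E / 2 ^ N) := by field_simp
      _ ≤ 2 ^ N * fraenkel E := by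
          exact mul_le_mul_of_nonneg_left hinf (le_of_lt h2)
end
end
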